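/- For parameters α ∈ [0,1], β ∈ (0,1], ν > α−1, the map from ℂ to ℓ²(ℕ,ℂ) sending z to the normalized coherent state |z⟩ with coefficients ⟨n|z⟩ = N_{α,β,ν}(|z|²)^{−1/2} · z^n / √([n]_{α,β,ν}!) is well defined (the coefficient sequence is square-summable with unit norm) and continuous in z. -/

import Mathlib

open Filter Real Set
open scoped ENNReal Topology

/-- The generalized factorial `[n]_{α,β,ν}!`. -/
noncomputable def genFact (α β ν : ℝ) (n : ℕ) : ℝ :=
  (∏ i ∈ Finset.Icc 1 n, Real.Gamma (β * i + 1) / Real.Gamma (β * i + 1 - α)) *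
    (Real.Gamma (β * n + 1 - α + ν) / Real.Gamma (1 - α + ν))

/-- The normalization function `N_{α,β,ν}(x) = ∑ xⁿ/[n]!`. -/
noncomputable def normFun (α β ν : ℝ) (x : ℝ) : ℝ :=
  ∑' n : ℕ, x ^ n / genFact α β ν n


/-- Log-convexity consequence: `x·Γ(x) ≤ Γ(x+s)·(x+s)^(1-s)` for `s ∈ [0,1]`. -/
lemma gamma_convex_ineq (x s : ℝ) (hx : 0 < x) (hs0 : 0 ≤ s) (hs1 : s ≤ 1) :
    x * Real.Gamma x ≤ Real.Gamma (x + s) * (x + s) ^ (1 - s) := by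
  have hxs : 0 < x + s := by linarith
  have hG : 0 < Real.Gamma (x + s) := Real.Gamma_pos_of_pos hxs
  have h := Real.convexOn_log_Gamma.2 (Set.mem_Ioi.2 hxs)
    (Set.mem_Ioi.2 (show (0:ℝ) < x + s + 1 by linarith)) hs0
    (show (0:ℝ) ≤ 1 - s by linarith) (by ring)
  simp only [smul_eq_mul, Function.comp] at h
  have e : s * (x + s) + (1 - s) * (x + s + 1) = x + 1 := by ring
  rw [e] at h
  rw [show x + s + 1 = (x + s) + 1 by ring, Real.Gamma_add_one hxs.ne',
    Real.log_mul hxs.ne' hG.ne'] at h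
  have h2 : Real.log (Real.Gamma (x + 1)) ≤
      Real.log (Real.Gamma (x + s)) + (1 - s) * Real.log (x + s) := by nlinarith [h]
  have h3 := Real.exp_le_exp.2 h2
  rw [Real.exp_log (Real.Gamma_pos_of_pos (show (0:ℝ) < x + 1 by linarith)),
    Real.exp_add, Real.exp_log hG] at h3
  rw [Real.Gamma_add_one hx.ne'] at h3
  calc x * Real.Gamma x ≤ Real.Gamma (x + s) * Real.exp ((1 - s) * Real.log (x + s)) := h3
    _ = Real.Gamma (x + s) * (x + s) ^ (1 - s) := by
        rw [Real.rpow_def_of_pos hxs, mul_comm (Real.log (x+s))]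


/-- simple lower bound for the Gamma ratio. -/
lemma gammaRatio_half (x s : ℝ) (hx : 1 ≤ x) (hs0 : 0 ≤ s) (hs1 : s ≤ 1) :
    (1/2 : ℝ) ≤ Real.Gamma (x + s) / Real.Gamma x := by
  have hx0 : (0:ℝ) < x := by linarith
  have hxs : (0:ℝ) < x + s := by linarith
  have hG : 0 < Real.Gamma x := Real.Gamma_pos_of_pos hx0
  have hGs : 0 < Real.Gamma (x + s) := Real.Gamma_pos_of_pos hxs
  have key := gamma_convex_ineq x s hx0 hs0 hs1
  have hb : (x + s) ^ (1 - s) ≤ x + 1 := by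
    calc (x + s) ^ (1 - s) ≤ (x + 1) ^ (1 - s) :=
          Real.rpow_le_rpow hxs.le (by linarith) (by linarith)
      _ ≤ (x + 1) ^ (1 : ℝ) :=
          Real.rpow_le_rpow_of_exponent_le (by linarith) (by linarith)
      _ = x + 1 := Real.rpow_one _
  have h4 : x * Real.Gamma x ≤ Real.Gamma (x + s) * (x + 1) := by
    calc x * Real.Gamma x ≤ Real.Gamma (x + s) * (x + s) ^ (1 - s) := key
      _ ≤ Real.Gamma (x + s) * (x + 1) := by
          exact mul_le_mul_of_nonneg_left hb hGs.le
  rw [le_div_iff₀ hG]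
  nlinarith [h4, hGs, hG]

/-- growing lower bound for the Gamma ratio with positive shift. -/
lemma gammaRatio_grow (y s : ℝ) (hy : 1 ≤ y) (hs0 : 0 < s) (hs1 : s ≤ 1) :
    (1/2 : ℝ) * (y + 1) ^ s ≤ Real.Gamma (y + s) / Real.Gamma y := by
  have hy0 : (0:ℝ) < y := by linarith
  have hys : (0:ℝ) < y + s := by linarith
  have hG : 0 < Real.Gamma y := Real.Gamma_pos_of_pos hy0
  have hGs : 0 < Real.Gamma (y + s) := Real.Gamma_pos_of_pos hys
  have key := gamma_convex_ineq y s hy0 hs0.le hs1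
  have hb : (y + s) ^ (1 - s) ≤ (y + 1) ^ (1 - s) :=
    Real.rpow_le_rpow hys.le (by linarith) (by linarith)
  have h4 : y * Real.Gamma y ≤ Real.Gamma (y + s) * (y + 1) ^ (1 - s) := by
    calc y * Real.Gamma y ≤ Real.Gamma (y + s) * (y + s) ^ (1 - s) := key
      _ ≤ _ := mul_le_mul_of_nonneg_left hb hGs.le
  -- (y+1)^(1-s) * (y+1)^s = y+1
  have hsplit : (y + 1) ^ (1 - s) * (y + 1) ^ s = y + 1 := by
    rw [← Real.rpow_add (by linarith)]; norm_num
  rw [le_div_iff₀ hG]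
  have hpow : 0 < (y + 1) ^ s := Real.rpow_pos_of_pos (by linarith) s
  -- suffices: (1/2)(y+1)^s * Γ y ≤ Γ(y+s)
  -- from h4: Γ(y+s) ≥ y Γ y / (y+1)^{1-s} = y Γ y (y+1)^s/(y+1)
  have h5 : y * Real.Gamma y * (y + 1) ^ s ≤ Real.Gamma (y + s) * (y + 1) := by
    calc y * Real.Gamma y * (y + 1) ^ s
        ≤ Real.Gamma (y + s) * (y + 1) ^ (1 - s) * (y + 1) ^ s :=
          mul_le_mul_of_nonneg_right h4 hpow.le
      _ = Real.Gamma (y + s) * (y + 1) := by rw [mul_assoc, hsplit]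
  nlinarith [h5, hG, hpow]

section
set_option linter.unusedSectionVars false
variable {α β ν : ℝ} (hα0 : 0 ≤ α) (hα1 : α ≤ 1) (hβ0 : 0 < β) (hβ1 : β ≤ 1)
  (hν : ν > α - 1)

include hα0 hα1 hβ0 hβ1 hν

lemma genFact_pos (n : ℕ) : 0 < genFact α β ν n := by
  have hbase : (0:ℝ) < 1 - α + ν := by linarith
  apply mul_pos
  · apply Finset.prod_pos
    intro i hi
    have hi1 : (1:ℝ) ≤ (i:ℝ) := by
      exact_mod_cast (Finset.mem_Icc.mp hi).1
    have h1 : (0:ℝ) < β * i + 1 := by nlinarith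
    have h2 : (0:ℝ) < β * i + 1 - α := by nlinarith
    exact div_pos (Real.Gamma_pos_of_pos h1) (Real.Gamma_pos_of_pos h2)
  · have h3 : (0:ℝ) < β * n + 1 - α + ν := by
      have : (0:ℝ) ≤ β * n := by positivity
      linarith
    exact div_pos (Real.Gamma_pos_of_pos h3) (Real.Gamma_pos_of_pos hbase)

lemma genFact_zero : genFact α β ν 0 = 1 := by
  simp [genFact]
  exact (Real.Gamma_pos_of_pos (show (0:ℝ) < 1 - α + ν by linarith)).ne'

lemma genFact_succ (n : ℕ) :
    genFact α β ν (n + 1) = genFact α β ν n *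
      ((Real.Gamma (β * (n+1) + 1) / Real.Gamma (β * (n+1) + 1 - α)) *
        (Real.Gamma (β * (n+1) + 1 - α + ν) / Real.Gamma (β * n + 1 - α + ν))) := by
  have hbase : (0:ℝ) < 1 - α + ν := by linarith
  have hn0 : (0:ℝ) ≤ β * n := by positivity
  have h3 : (0:ℝ) < β * n + 1 - α + ν := by linarith
  have h4 : (0:ℝ) < β * ((n:ℝ)+1) + 1 - α := by nlinarith
  unfold genFact
  rw [Finset.prod_Icc_succ_top (by omega : 1 ≤ n + 1)]
  set P := ∏ i ∈ Finset.Icc 1 n, Real.Gamma (β * i + 1) / Real.Gamma (β * i + 1 - α)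
  have ne1 := (Real.Gamma_pos_of_pos hbase).ne'
  have ne2 := (Real.Gamma_pos_of_pos h3).ne'
  have ne3 := (Real.Gamma_pos_of_pos h4).ne'
  push_cast
  push_cast at ne3
  field_simp

lemma genFact_ratio_tendsto :
    Tendsto (fun n : ℕ => genFact α β ν (n+1) / genFact α β ν n) atTop atTop := by
  have hbase : (0:ℝ) < 1 - α + ν := by linarith
  have hyt : Tendsto (fun n : ℕ => β * n + 1 - α + ν) atTop atTop := by
    have h0 := (tendsto_natCast_atTop_atTop (R := ℝ)).const_mul_atTop hβ0
    have := tendsto_atTop_add_const_right atTop (1 - α + ν) h0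
    convert this using 2 with n; ring
  have hxt : Tendsto (fun n : ℕ => β * ((n:ℝ)+1) + 1 - α) atTop atTop := by
    have h0 := (tendsto_natCast_atTop_atTop (R := ℝ)).const_mul_atTop hβ0
    have := tendsto_atTop_add_const_right atTop (β + 1 - α) h0
    convert this using 2 with n; ring
  have hlow : ∀ᶠ n : ℕ in atTop,
      (1/4 : ℝ) * ((β * n + 1 - α + ν) + 1) ^ β ≤
        genFact α β ν (n+1) / genFact α β ν n := by
    filter_upwards [hxt.eventually_ge_atTop 1, hyt.eventually_ge_atTop 1] with n hx1 hy1
    have hfpos := genFact_pos hα0 hα1 hβ0 hβ1 hν n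
    have hdiv : genFact α β ν (n+1) / genFact α β ν n =
        (Real.Gamma ((β * ((n:ℝ)+1) + 1 - α) + α) / Real.Gamma (β * ((n:ℝ)+1) + 1 - α)) *
          (Real.Gamma ((β * (n:ℝ) + 1 - α + ν) + β) / Real.Gamma (β * (n:ℝ) + 1 - α + ν)) := by
      rw [genFact_succ hα0 hα1 hβ0 hβ1 hν n]
      rw [mul_div_right_comm, div_self hfpos.ne', one_mul]
      ring_nf
    rw [hdiv]
    set x := β * ((n:ℝ)+1) + 1 - α with hxdef
    set y := β * (n:ℝ) + 1 - α + ν with hydef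
    have h1 := gammaRatio_half x α hx1 hα0 hα1
    have h2 := gammaRatio_grow y β hy1 hβ0 hβ1
    have hp2 : (0:ℝ) ≤ (1/2 : ℝ) * (y + 1) ^ β := by positivity
    calc (1/4 : ℝ) * (y + 1) ^ β = (1/2) * ((1/2) * (y+1)^β) := by ring
      _ ≤ (Real.Gamma (x + α) / Real.Gamma x) * (Real.Gamma (y + β) / Real.Gamma y) :=
          mul_le_mul h1 h2 hp2 (le_trans (by norm_num) h1)
  refine tendsto_atTop_mono' _ hlow ?_
  have h1 : Tendsto (fun n : ℕ => (β * n + 1 - α + ν) + 1) atTop atTop :=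
    tendsto_atTop_add_const_right _ _ hyt
  have h2 := (tendsto_rpow_atTop hβ0).comp h1
  have h3 := h2.const_mul_atTop (show (0:ℝ) < 1/4 by norm_num)
  simpa [Function.comp] using h3

lemma genFact_summable {x : ℝ} (hx : 0 ≤ x) :
    Summable (fun n : ℕ => x ^ n / genFact α β ν n) := by
  apply summable_of_ratio_norm_eventually_le (r := 1/2) (by norm_num)
  filter_upwards [(genFact_ratio_tendsto hα0 hα1 hβ0 hβ1 hν).eventually_ge_atTop (2*x+1)]
    with n hn
  have hfpos := genFact_pos hα0 hα1 hβ0 hβ1 hν n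
  have hfpos' := genFact_pos hα0 hα1 hβ0 hβ1 hν (n+1)
  have hr : (0:ℝ) < genFact α β ν (n+1) / genFact α β ν n := div_pos hfpos' hfpos
  rw [Real.norm_of_nonneg (by positivity), Real.norm_of_nonneg (by positivity)]
  rw [div_le_iff₀ hfpos', pow_succ]
  -- x^n * x ≤ 1/2 * (x^n / f n) * f (n+1)
  have key : x ≤ (1/2) * (genFact α β ν (n+1) / genFact α β ν n) := by
    set R := genFact α β ν (n+1) / genFact α β ν n
    linarith
  calc x ^ n * x ≤ x ^ n * ((1/2) * (genFact α β ν (n+1) / genFact α β ν n)) :=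
        mul_le_mul_of_nonneg_left key (by positivity)
    _ = 1/2 * (x ^ n / genFact α β ν n) * genFact α β ν (n+1) := by
        field_simp



lemma gFun_summable (w : ℂ) :
    Summable (fun n : ℕ => w ^ n / (genFact α β ν n : ℂ)) := by
  apply Summable.of_norm
  have h : ∀ n : ℕ, ‖w ^ n / (genFact α β ν n : ℂ)‖ = ‖w‖ ^ n / genFact α β ν n := by
    intro n
    rw [norm_div, norm_pow, Complex.norm_real,
      Real.norm_of_nonneg (genFact_pos hα0 hα1 hβ0 hβ1 hν n).le]
  simpa only [h] using genFact_summable hα0 hα1 hβ0 hβ1 hν (norm_nonneg w)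

lemma gFun_continuous :
    Continuous (fun w : ℂ => ∑' n : ℕ, w ^ n / (genFact α β ν n : ℂ)) := by
  rw [continuous_iff_continuousAt]
  intro z0
  set R : ℝ := ‖z0‖ + 1 with hR
  have hR0 : 0 ≤ R := by positivity
  have hco : ContinuousOn (fun w : ℂ => ∑' n : ℕ, w ^ n / (genFact α β ν n : ℂ))
      (Metric.ball 0 R) := by
    apply continuousOn_tsum
      (fun n => ((continuous_pow n).div_const _).continuousOn)
      (genFact_summable hα0 hα1 hβ0 hβ1 hν hR0)
    intro n w hw
    rw [norm_div, norm_pow, Complex.norm_real, Real.norm_of_nonneg (genFact_pos hα0 hα1 hβ0 hβ1 hν n).le]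
    have hwR : ‖w‖ ≤ R := (mem_ball_zero_iff.mp hw).le
    have hfn := genFact_pos hα0 hα1 hβ0 hβ1 hν n
    gcongr
  exact hco.continuousAt (Metric.isOpen_ball.mem_nhds
    (mem_ball_zero_iff.mpr (by rw [hR]; linarith)))

lemma gFun_real (x : ℝ) :
    (∑' n : ℕ, (x : ℂ) ^ n / (genFact α β ν n : ℂ)) = ((normFun α β ν x : ℝ) : ℂ) := by
  rw [normFun, Complex.ofReal_tsum]
  congr 1
  funext n
  push_cast
  ring

lemma normFun_ge_one {x : ℝ} (hx : 0 ≤ x) : 1 ≤ normFun α β ν x := by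
  have hs := genFact_summable hα0 hα1 hβ0 hβ1 hν hx
  have h := Summable.le_tsum hs 0 (fun j _ => div_nonneg (pow_nonneg hx j) (genFact_pos hα0 hα1 hβ0 hβ1 hν j).le)
  simpa [normFun, genFact_zero hα0 hα1 hβ0 hβ1 hν] using h
end

/-- The coherent-state map. -/
theorem coherent_state_wellDefined_continuous (α β ν : ℝ) (hα0 : 0 ≤ α) (hα1 : α ≤ 1)
    (hβ0 : 0 < β) (hβ1 : β ≤ 1) (hν : ν > α - 1) :
    ∃ F : ℂ → lp (fun _ : ℕ => ℂ) 2,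
      Continuous F ∧ (∀ z : ℂ, ‖F z‖ = 1) ∧
        ∀ (z : ℂ) (n : ℕ),
          (F z : ∀ _ : ℕ, ℂ) n =
            ((Real.sqrt (normFun α β ν (‖z‖ ^ 2)))⁻¹ : ℂ) *
              (z ^ n / (Real.sqrt (genFact α β ν n) : ℂ)) := by
  have hf : ∀ n, 0 < genFact α β ν n := genFact_pos hα0 hα1 hβ0 hβ1 hν
  have hgc := gFun_continuous hα0 hα1 hβ0 hβ1 hν
  have hgr := gFun_real hα0 hα1 hβ0 hβ1 hν
  have hN : ∀ z : ℂ, 0 < normFun α β ν (‖z‖ ^ 2) := fun z =>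
    lt_of_lt_of_le one_pos (normFun_ge_one hα0 hα1 hβ0 hβ1 hν (sq_nonneg _))
  have hsN : ∀ z : ℂ, 0 < Real.sqrt (normFun α β ν (‖z‖ ^ 2)) := fun z =>
    Real.sqrt_pos.mpr (hN z)
  set c : ℂ → ℕ → ℂ := fun z n => z ^ n / (Real.sqrt (genFact α β ν n) : ℂ) with hc
  have hrp : ∀ a : ℝ, a ^ ((2:ℝ≥0∞)).toReal = a ^ (2:ℕ) := fun a => by
    rw [show ((2:ℝ≥0∞)).toReal = ((2:ℕ):ℝ) by norm_num, Real.rpow_natCast]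
  have hnormc : ∀ (z : ℂ) (n : ℕ),
      ‖c z n‖ ^ (2:ℕ) = (‖z‖ ^ 2) ^ n / genFact α β ν n := by
    intro z n
    rw [hc]
    simp only
    rw [norm_div, norm_pow, Complex.norm_real, Real.norm_of_nonneg (Real.sqrt_nonneg _),
      div_pow, Real.sq_sqrt (hf n).le, pow_right_comm]
  have hsum2 : ∀ z : ℂ, Summable (fun n => ‖c z n‖ ^ (2:ℕ)) := by
    intro z
    simp only [hnormc]
    exact genFact_summable hα0 hα1 hβ0 hβ1 hν (by positivity)
  have hmem : ∀ z : ℂ, Memℓp (c z) 2 := fun z =>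
    memℓp_gen (by simpa only [hrp] using hsum2 z)
  set G : ℂ → lp (fun _ : ℕ => ℂ) 2 := fun z => ⟨c z, hmem z⟩ with hG
  have hGapp : ∀ (z : ℂ) (n : ℕ), (G z : ∀ _ : ℕ, ℂ) n = c z n := fun z n => rfl
  have hGnorm2 : ∀ z : ℂ, ‖G z‖ ^ (2:ℕ) = normFun α β ν (‖z‖ ^ 2) := by
    intro z
    have h0 : 0 < ((2:ℝ≥0∞)).toReal := by norm_num
    have h := lp.norm_rpow_eq_tsum h0 (G z)
    simp only [hrp] at h
    rw [h, normFun]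
    exact tsum_congr (fun n => hnormc z n)
  have hGnorm : ∀ z : ℂ, ‖G z‖ = Real.sqrt (normFun α β ν (‖z‖ ^ 2)) := fun z => by
    rw [← hGnorm2 z, Real.sqrt_sq (norm_nonneg _)]
  set F : ℂ → lp (fun _ : ℕ => ℂ) 2 := fun z =>
    (((Real.sqrt (normFun α β ν (‖z‖ ^ 2)))⁻¹ : ℝ) : ℂ) • G z with hF
  have hFnorm : ∀ z : ℂ, ‖F z‖ = 1 := by
    intro z
    rw [hF]
    simp only
    rw [norm_smul, hGnorm z, Complex.norm_real,
      Real.norm_of_nonneg (inv_nonneg.mpr (Real.sqrt_nonneg _))]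
    exact inv_mul_cancel₀ (hsN z).ne'
  have hinner : ∀ z w : ℂ, (inner ℂ (F z) (F w) : ℂ) =
      (((Real.sqrt (normFun α β ν (‖z‖ ^ 2)))⁻¹ : ℝ) : ℂ) *
        ((((Real.sqrt (normFun α β ν (‖w‖ ^ 2)))⁻¹ : ℝ) : ℂ) *
          ∑' n : ℕ, ((starRingEnd ℂ) z * w) ^ n / (genFact α β ν n : ℂ)) := by
    intro z w
    rw [hF]
    simp only
    rw [inner_smul_left, inner_smul_right, Complex.conj_ofReal, lp.inner_eq_tsum]
    congr 2
    refine tsum_congr (fun n => ?_)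
    rw [hGapp, hGapp, RCLike.inner_apply', hc]
    simp only
    rw [map_div₀, map_pow, Complex.conj_ofReal, div_mul_div_comm, ← mul_pow,
      ← Complex.ofReal_mul, Real.mul_self_sqrt (hf n).le]
  refine ⟨F, ?_, hFnorm, ?_⟩
  · -- Continuity
    rw [continuous_iff_continuousAt]
    intro z0
    have hNcont : Continuous (fun z : ℂ => normFun α β ν (‖z‖ ^ 2)) := by
      have e : (fun z : ℂ => normFun α β ν (‖z‖ ^ 2)) = fun z =>
          (∑' n : ℕ, ((‖z‖ ^ 2 : ℝ) : ℂ) ^ n / (genFact α β ν n : ℂ)).re := by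
        funext z
        rw [hgr, Complex.ofReal_re]
      rw [e]
      exact Complex.continuous_re.comp (hgc.comp (Complex.continuous_ofReal.comp
        ((continuous_pow 2).comp continuous_norm)))
    have hscont : Continuous (fun z : ℂ =>
        (((Real.sqrt (normFun α β ν (‖z‖ ^ 2)))⁻¹ : ℝ) : ℂ)) :=
      Complex.continuous_ofReal.comp ((Real.continuous_sqrt.comp hNcont).inv₀
        (fun z => (hsN z).ne'))
    have hc2 : Continuous (fun z : ℂ =>
        (((Real.sqrt (normFun α β ν (‖z‖ ^ 2)))⁻¹ : ℝ) : ℂ) *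
          ((((Real.sqrt (normFun α β ν (‖z0‖ ^ 2)))⁻¹ : ℝ) : ℂ) *
            ∑' n : ℕ, ((starRingEnd ℂ) z * z0) ^ n / (genFact α β ν n : ℂ))) :=
      hscont.mul (continuous_const.mul (hgc.comp (Complex.continuous_conj.mul
        continuous_const)))
    have hval : (((Real.sqrt (normFun α β ν (‖z0‖ ^ 2)))⁻¹ : ℝ) : ℂ) *
        ((((Real.sqrt (normFun α β ν (‖z0‖ ^ 2)))⁻¹ : ℝ) : ℂ) *
          ∑' n : ℕ, ((starRingEnd ℂ) z0 * z0) ^ n / (genFact α β ν n : ℂ)) = 1 := by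
      have e1 : (starRingEnd ℂ) z0 * z0 = ((‖z0‖ ^ 2 : ℝ) : ℂ) := by
        rw [Complex.conj_mul']
        push_cast
        ring
      rw [e1, hgr, ← Complex.ofReal_mul, ← Complex.ofReal_mul]
      rw [show ((1:ℂ)) = ((1:ℝ) : ℂ) by norm_num]
      congr 1
      rw [← mul_assoc, ← mul_inv, Real.mul_self_sqrt (hN z0).le]
      exact inv_mul_cancel₀ (hN z0).ne'
    have htI : Tendsto (fun z => (inner ℂ (F z) (F z0) : ℂ)) (𝓝 z0) (𝓝 1) := by
      have h := hc2.continuousAt (x := z0)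
      rw [ContinuousAt] at h
      rw [hval] at h
      refine h.congr' ?_
      filter_upwards with z
      rw [hinner]
    have hreI : Tendsto (fun z => (inner ℂ (F z) (F z0) : ℂ).re) (𝓝 z0) (𝓝 1) := by
      have := (Complex.continuous_re.tendsto 1).comp htI
      simpa [Function.comp_def] using this
    have hid : ∀ z : ℂ, ‖F z - F z0‖ = Real.sqrt (2 - 2 * (inner ℂ (F z) (F z0) : ℂ).re) := by
      intro z
      have h := @norm_sub_sq ℂ _ _ _ _ (F z) (F z0)
      rw [hFnorm z, hFnorm z0] at h
      have h2 : ‖F z - F z0‖ ^ 2 = 2 - 2 * (inner ℂ (F z) (F z0) : ℂ).re := by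
        rw [h]
        have : RCLike.re (inner ℂ (F z) (F z0) : ℂ) = (inner ℂ (F z) (F z0) : ℂ).re := rfl
        rw [this]
        ring
      rw [← h2, Real.sqrt_sq (norm_nonneg _)]
    have h1 : Tendsto (fun z => 2 - 2 * (inner ℂ (F z) (F z0) : ℂ).re) (𝓝 z0) (𝓝 0) := by
      have h2 := hreI.const_mul (2:ℝ)
      have h3 := (tendsto_const_nhds (x := (2:ℝ)) (f := 𝓝 z0)).sub h2
      simpa using h3
    have hfin : Tendsto (fun z => Real.sqrt (2 - 2 * (inner ℂ (F z) (F z0) : ℂ).re))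
        (𝓝 z0) (𝓝 0) := by
      have := (Real.continuous_sqrt.tendsto 0).comp h1
      simpa [Function.comp_def] using this
    have : Tendsto (fun z => ‖F z - F z0‖) (𝓝 z0) (𝓝 0) := by
      simpa only [hid] using hfin
    exact tendsto_iff_norm_sub_tendsto_zero.mpr this
  · -- coefficients
    intro z n
    rw [hF]
    simp only
    rw [lp.coeFn_smul, Pi.smul_apply, smul_eq_mul, hGapp, hc]
    simp [Complex.ofReal_inv]
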